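/- Let $E_1,\dots,E_{n+1},F$ be Banach spaces (over the real or complex field), $1<p<\infty$, $1/p+1/p^*=1$. If $T:E_1\times\cdots\times E_n\to F$ is a multiple Cohen strongly $p$-summing $n$-linear operator and $\gamma\in E_{n+1}'$, then the $(n+1)$-linear operator $\gamma T:E_1\times\cdots\times E_{n+1}\to F$, $(\gamma T)(x_1,\dots,x_{n+1})=\gamma(x_{n+1})\,T(x_1,\dots,x_n)$, is multiple Cohen strongly $p$-summing and $\|\gamma T\|_{mCoh,p}\le\|\gamma\|\,\|T\|_{mCoh,p}$. -/

import Mathlib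

open scoped BigOperators

/-- The weak `q`-norm of a finite family of continuous linear functionals on `F`. -/
noncomputable def weakNorm {𝕜 F : Type*} [RCLike 𝕜] [NormedAddCommGroup F] [NormedSpace 𝕜 F]
    {ι : Type*} [Fintype ι] (q : ℝ) (φ : ι → F →L[𝕜] 𝕜) : ℝ :=
  ⨆ y : Metric.closedBall (0 : F) 1, (∑ i, ‖φ i (y : F)‖ ^ q) ^ (1 / q)

/-- `T` is multiple Cohen strongly `p`-summing with constant `C`. -/
def MCohIneq (𝕜 : Type*) [RCLike 𝕜] {n : ℕ} {E : Fin n → Type*}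
    [∀ k, NormedAddCommGroup (E k)] [∀ k, NormedSpace 𝕜 (E k)]
    {F : Type*} [NormedAddCommGroup F] [NormedSpace 𝕜 F]
    (p q : ℝ) (T : (∀ k, E k) → F) (C : ℝ) : Prop :=
  ∀ (m : ℕ) (x : ∀ k, Fin m → E k) (φ : (Fin n → Fin m) → F →L[𝕜] 𝕜),
    ∑ α : Fin n → Fin m, ‖φ α (T (fun k => x k (α k)))‖ ≤
      C * (∏ k, (∑ j, ‖x k j‖ ^ p) ^ (1 / p)) * weakNorm q φ

/-- The multiple Cohen strongly `p`-summing norm: the smallest admissible constant. -/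
noncomputable def mCohNorm (𝕜 : Type*) [RCLike 𝕜] {n : ℕ} {E : Fin n → Type*}
    [∀ k, NormedAddCommGroup (E k)] [∀ k, NormedSpace 𝕜 (E k)]
    {F : Type*} [NormedAddCommGroup F] [NormedSpace 𝕜 F]
    (p q : ℝ) (T : (∀ k, E k) → F) : ℝ :=
  sInf {C : ℝ | 0 ≤ C ∧ MCohIneq 𝕜 p q T C}

section Aux

variable {𝕜 F : Type*} [RCLike 𝕜] [NormedAddCommGroup F] [NormedSpace 𝕜 F]
  {ι : Type*} [Fintype ι]

lemma weakNorm_nonneg (q : ℝ) (φ : ι → F →L[𝕜] 𝕜) : 0 ≤ weakNorm q φ :=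
  Real.iSup_nonneg fun _ => Real.rpow_nonneg
    (Finset.sum_nonneg fun _ _ => Real.rpow_nonneg (norm_nonneg _) _) _

lemma le_weakNorm {q : ℝ} (hq : 0 < q) (φ : ι → F →L[𝕜] 𝕜)
    (y : Metric.closedBall (0 : F) 1) :
    (∑ i, ‖φ i (y : F)‖ ^ q) ^ (1 / q) ≤ weakNorm q φ := by
  refine le_ciSup (f := fun y : Metric.closedBall (0 : F) 1 =>
    (∑ i, ‖φ i (y : F)‖ ^ q) ^ (1 / q)) ⟨(∑ i, ‖φ i‖ ^ q) ^ (1 / q), ?_⟩ y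
  rintro r ⟨z, rfl⟩
  have hz : ‖(z : F)‖ ≤ 1 := mem_closedBall_zero_iff.mp z.2
  refine Real.rpow_le_rpow (Finset.sum_nonneg fun _ _ => Real.rpow_nonneg (norm_nonneg _) _)
    (Finset.sum_le_sum fun i _ => ?_) (by positivity)
  refine Real.rpow_le_rpow (norm_nonneg _) ?_ hq.le
  calc ‖φ i (z : F)‖ ≤ ‖φ i‖ * ‖(z : F)‖ := (φ i).le_opNorm _
    _ ≤ ‖φ i‖ * 1 := by gcongr
    _ = ‖φ i‖ := mul_one _

end Aux

/-- If `T : E₁ × ⋯ × Eₙ → F` is a multiple Cohen strongly `p`-summing `n`-linear operator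
and `γ ∈ E_{n+1}'`, then the `(n+1)`-linear operator
`(γT)(x₁,…,x_{n+1}) = γ(x_{n+1}) T(x₁,…,xₙ)` is multiple Cohen strongly `p`-summing and
`‖γT‖_{mCoh,p} ≤ ‖γ‖ ‖T‖_{mCoh,p}`. -/
theorem stmt19 {𝕜 : Type*} [RCLike 𝕜] {n : ℕ}
    {E : Fin (n + 1) → Type*} [∀ k, NormedAddCommGroup (E k)] [∀ k, NormedSpace 𝕜 (E k)]
    [∀ k, CompleteSpace (E k)]
    {F : Type*} [NormedAddCommGroup F] [NormedSpace 𝕜 F] [CompleteSpace F]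
    (p q : ℝ) (hp : 1 < p) (hq : 1 / p + 1 / q = 1)
    (T : ContinuousMultilinearMap 𝕜 (fun k : Fin n => E k.castSucc) F)
    (hT : ∃ C > 0, MCohIneq 𝕜 p q (⇑T) C) (γ : E (Fin.last n) →L[𝕜] 𝕜) :
    (∃ C > 0, MCohIneq 𝕜 p q
        (fun x : ∀ k : Fin (n + 1), E k =>
          γ (x (Fin.last n)) • T (fun k : Fin n => x k.castSucc)) C) ∧
      mCohNorm 𝕜 p q
        (fun x : ∀ k : Fin (n + 1), E k =>
          γ (x (Fin.last n)) • T (fun k : Fin n => x k.castSucc)) ≤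
        ‖γ‖ * mCohNorm 𝕜 p q (⇑T) := by
  have hpq : p.HolderConjugate q := Real.holderConjugate_iff.mpr ⟨hp, by simpa [one_div] using hq⟩
  have hp0 : 0 < p := hpq.pos
  have hq0 : 0 < q := hpq.symm.pos
  set S : (∀ k : Fin (n + 1), E k) → F := fun x =>
    γ (x (Fin.last n)) • T (fun k : Fin n => x k.castSucc) with hS
  -- the key step
  have key : ∀ D : ℝ, 0 ≤ D → MCohIneq 𝕜 p q (⇑T) D → MCohIneq 𝕜 p q S (‖γ‖ * D) := by
    intro D hD0 hD m x φ
    set xl : Fin m → E (Fin.last n) := x (Fin.last n) with hxl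
    set a : Fin m → ℝ := fun j => ‖γ (xl j)‖ with ha
    have ha0 : ∀ j, 0 ≤ a j := fun j => norm_nonneg _
    set Tb : (Fin n → Fin m) → F := fun β => T fun k => x k.castSucc (β k) with hTb
    set z : (Fin n → Fin m) → Fin m → 𝕜 := fun β j => φ (Fin.snoc β j) (Tb β) with hz
    set θ : (Fin n → Fin m) → Fin m → 𝕜 := fun β j =>
      if z β j = 0 then 0 else (‖z β j‖ : 𝕜) / z β j with hθ
    have hθz : ∀ β j, θ β j * z β j = (‖z β j‖ : 𝕜) := by
      intro β j
      by_cases h : z β j = 0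
      · simp [hθ, h]
      · simp [hθ, h, div_mul_cancel₀]
    have hθ1 : ∀ β j, ‖θ β j‖ ≤ 1 := by
      intro β j
      by_cases h : z β j = 0
      · simp [hθ, h]
      · simp only [hθ, h, if_false, norm_div, RCLike.norm_ofReal, abs_norm]
        exact le_of_eq (div_self (norm_ne_zero_iff.mpr h))
    set ψ : (Fin n → Fin m) → F →L[𝕜] 𝕜 := fun β =>
      ∑ j, ((a j : 𝕜) * θ β j) • φ (Fin.snoc β j) with hψ
    -- the index equivalence
    set e : Fin m × (Fin n → Fin m) ≃ (Fin (n + 1) → Fin m) :=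
      Fin.snocEquiv (fun _ => Fin m) with he
    have he' : ∀ (j : Fin m) (β : Fin n → Fin m), e (j, β) = Fin.snoc β j := fun _ _ => rfl
    -- LHS rewrites
    have hLHS : ∑ α : Fin (n + 1) → Fin m, ‖φ α (S (fun k => x k (α k)))‖ =
        ∑ β : Fin n → Fin m, ∑ j, a j * ‖z β j‖ := by
      rw [← Equiv.sum_comp e (fun α => ‖φ α (S (fun k => x k (α k)))‖), Fintype.sum_prod_type,
        Finset.sum_comm]
      refine Finset.sum_congr rfl fun β _ => Finset.sum_congr rfl fun j _ => ?_
      simp only [hS, he' j β, Fin.snoc_last, Fin.snoc_castSucc, map_smul, norm_smul,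
        smul_eq_mul, norm_mul]
      rfl
    -- ψ applied to Tb
    have hψT : ∀ β, ‖ψ β (Tb β)‖ = ∑ j, a j * ‖z β j‖ := by
      intro β
      have : ψ β (Tb β) = ((∑ j, a j * ‖z β j‖ : ℝ) : 𝕜) := by
        simp only [hψ, ContinuousLinearMap.sum_apply, ContinuousLinearMap.smul_apply,
          smul_eq_mul]
        push_cast
        refine Finset.sum_congr rfl fun j _ => ?_
        rw [mul_assoc, hθz β j]
      rw [this, RCLike.norm_ofReal, abs_of_nonneg]
      exact Finset.sum_nonneg fun j _ => mul_nonneg (ha0 j) (norm_nonneg _)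
    -- apply hD to ψ
    have happ := hD m (fun k => x k.castSucc) ψ
    -- weak norm bound for ψ
    set Ap : ℝ := (∑ j, a j ^ p) ^ (1 / p) with hAp
    have hAp0 : 0 ≤ Ap := Real.rpow_nonneg (Finset.sum_nonneg fun j _ =>
      Real.rpow_nonneg (ha0 j) _) _
    have hwψ : weakNorm q ψ ≤ Ap * weakNorm q φ := by
      refine Real.iSup_le (fun y => ?_) (mul_nonneg hAp0 (weakNorm_nonneg q φ))
      have step1 : ∀ β : Fin n → Fin m, ‖ψ β (y : F)‖ ≤
          ∑ j, a j * ‖φ (Fin.snoc β j) (y : F)‖ := by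
        intro β
        simp only [hψ, ContinuousLinearMap.sum_apply, ContinuousLinearMap.smul_apply,
          smul_eq_mul]
        refine (norm_sum_le _ _).trans (Finset.sum_le_sum fun j _ => ?_)
        rw [norm_mul, norm_mul, RCLike.norm_ofReal, abs_of_nonneg (ha0 j)]
        exact mul_le_mul_of_nonneg_right (mul_le_of_le_one_right (ha0 j) (hθ1 β j))
          (norm_nonneg _)
      have step2 : ∀ β : Fin n → Fin m, ‖ψ β (y : F)‖ ^ q ≤
          Ap ^ q * ∑ j, ‖φ (Fin.snoc β j) (y : F)‖ ^ q := by
        intro β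
        have h2 : ∑ j, a j * ‖φ (Fin.snoc β j) (y : F)‖ ≤
            Ap * (∑ j, ‖φ (Fin.snoc β j) (y : F)‖ ^ q) ^ (1 / q) :=
          Real.inner_le_Lp_mul_Lq_of_nonneg Finset.univ hpq
            (fun j _ => ha0 j) (fun j _ => norm_nonneg _)
        have h3 := Real.rpow_le_rpow (norm_nonneg _) ((step1 β).trans h2) hq0.le
        refine h3.trans (le_of_eq ?_)
        rw [Real.mul_rpow hAp0 (Real.rpow_nonneg (Finset.sum_nonneg fun _ _ =>
          Real.rpow_nonneg (norm_nonneg _) _) _), one_div,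
          Real.rpow_inv_rpow (Finset.sum_nonneg fun _ _ =>
            Real.rpow_nonneg (norm_nonneg _) _) hq0.ne']
      calc (∑ β : Fin n → Fin m, ‖ψ β (y : F)‖ ^ q) ^ (1 / q)
          ≤ (Ap ^ q * ∑ α : Fin (n + 1) → Fin m, ‖φ α (y : F)‖ ^ q) ^ (1 / q) := by
            refine Real.rpow_le_rpow (Finset.sum_nonneg fun _ _ =>
              Real.rpow_nonneg (norm_nonneg _) _) ?_ (by positivity)
            rw [← Equiv.sum_comp e (fun α => ‖φ α (y : F)‖ ^ q), Fintype.sum_prod_type,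
              Finset.sum_comm, Finset.mul_sum]
            exact Finset.sum_le_sum fun β _ => (step2 β).trans (le_of_eq rfl)
        _ ≤ Ap * weakNorm q φ := by
            rw [Real.mul_rpow (by positivity) (Finset.sum_nonneg fun _ _ =>
              Real.rpow_nonneg (norm_nonneg _) _), one_div,
              Real.rpow_rpow_inv hAp0 hq0.ne', ← one_div]
            exact mul_le_mul_of_nonneg_left (le_weakNorm hq0 φ y) hAp0
    -- bound for Ap
    set Lp : ℝ := (∑ j, ‖xl j‖ ^ p) ^ (1 / p) with hLp
    have hLp0 : 0 ≤ Lp := Real.rpow_nonneg (Finset.sum_nonneg fun _ _ =>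
      Real.rpow_nonneg (norm_nonneg _) _) _
    have hAp_le : Ap ≤ ‖γ‖ * Lp := by
      have h1 : ∀ j, a j ^ p ≤ ‖γ‖ ^ p * ‖xl j‖ ^ p := by
        intro j
        rw [← Real.mul_rpow (norm_nonneg γ) (norm_nonneg _)]
        exact Real.rpow_le_rpow (ha0 j) (γ.le_opNorm _) hp0.le
      calc Ap ≤ (∑ j, ‖γ‖ ^ p * ‖xl j‖ ^ p) ^ (1 / p) :=
            Real.rpow_le_rpow (Finset.sum_nonneg fun j _ => Real.rpow_nonneg (ha0 j) _)
              (Finset.sum_le_sum fun j _ => h1 j) (by positivity)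
        _ = ‖γ‖ * Lp := by
            rw [← Finset.mul_sum, Real.mul_rpow (by positivity)
              (Finset.sum_nonneg fun _ _ => Real.rpow_nonneg (norm_nonneg _) _), one_div,
              Real.rpow_rpow_inv (norm_nonneg γ) hp0.ne', hLp, one_div]
    -- assemble
    set P : ℝ := ∏ k : Fin n, (∑ j, ‖x k.castSucc j‖ ^ p) ^ (1 / p) with hP
    have hP0 : 0 ≤ P := Finset.prod_nonneg fun k _ => Real.rpow_nonneg
      (Finset.sum_nonneg fun _ _ => Real.rpow_nonneg (norm_nonneg _) _) _
    have hprod : (∏ k : Fin (n + 1), (∑ j, ‖x k j‖ ^ p) ^ (1 / p)) = P * Lp := by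
      rw [Fin.prod_univ_castSucc]
    calc ∑ α : Fin (n + 1) → Fin m, ‖φ α (S (fun k => x k (α k)))‖
        = ∑ β : Fin n → Fin m, ‖ψ β (Tb β)‖ := by
          rw [hLHS]; exact (Finset.sum_congr rfl fun β _ => (hψT β)).symm
      _ ≤ D * P * weakNorm q ψ := happ
      _ ≤ D * P * (Ap * weakNorm q φ) :=
          mul_le_mul_of_nonneg_left hwψ (mul_nonneg hD0 hP0)
      _ ≤ D * P * ((‖γ‖ * Lp) * weakNorm q φ) :=
          mul_le_mul_of_nonneg_left
            (mul_le_mul_of_nonneg_right hAp_le (weakNorm_nonneg q φ))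
            (mul_nonneg hD0 hP0)
      _ = ‖γ‖ * D * (P * Lp) * weakNorm q φ := by ring
      _ = ‖γ‖ * D * (∏ k : Fin (n + 1), (∑ j, ‖x k j‖ ^ p) ^ (1 / p)) * weakNorm q φ := by
          rw [hprod]
  -- monotonicity of the ineq in the constant
  have mono : ∀ C C' : ℝ, C ≤ C' → MCohIneq 𝕜 p q S C → MCohIneq 𝕜 p q S C' := by
    intro C C' hCC h m x φ
    refine (h m x φ).trans ?_
    have h1 : 0 ≤ (∏ k, (∑ j, ‖x k j‖ ^ p) ^ (1 / p)) * weakNorm q φ :=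
      mul_nonneg (Finset.prod_nonneg fun k _ => Real.rpow_nonneg
        (Finset.sum_nonneg fun _ _ => Real.rpow_nonneg (norm_nonneg _) _) _)
        (weakNorm_nonneg q φ)
    rw [mul_assoc, mul_assoc]
    exact mul_le_mul_of_nonneg_right hCC h1
  obtain ⟨C, hC0, hC⟩ := hT
  constructor
  · exact ⟨‖γ‖ * C + 1, by positivity,
      mono _ _ (le_add_of_nonneg_right zero_le_one) (key C hC0.le hC)⟩
  · have hBbdd : BddBelow {c : ℝ | 0 ≤ c ∧ MCohIneq 𝕜 p q S c} := ⟨0, fun c hc => hc.1⟩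
    have hAne : Set.Nonempty {c : ℝ | 0 ≤ c ∧ MCohIneq 𝕜 p q (⇑T) c} := ⟨C, hC0.le, hC⟩
    have hstep : ∀ c ∈ {c : ℝ | 0 ≤ c ∧ MCohIneq 𝕜 p q (⇑T) c},
        mCohNorm 𝕜 p q S ≤ ‖γ‖ * c := fun c hc =>
      csInf_le hBbdd ⟨mul_nonneg (norm_nonneg γ) hc.1, key c hc.1 hc.2⟩
    have hAInf0 : 0 ≤ mCohNorm 𝕜 p q (⇑T) := le_csInf hAne fun c hc => hc.1
    rcases eq_or_lt_of_le (norm_nonneg γ) with hγ | hγ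
    · have h0 : mCohNorm 𝕜 p q S ≤ 0 := by
        have := hstep C ⟨hC0.le, hC⟩
        rw [← hγ] at this
        simpa using this
      calc mCohNorm 𝕜 p q S ≤ 0 := h0
        _ ≤ ‖γ‖ * mCohNorm 𝕜 p q (⇑T) := mul_nonneg (norm_nonneg γ) hAInf0
    · have h1 : mCohNorm 𝕜 p q S / ‖γ‖ ≤ mCohNorm 𝕜 p q (⇑T) := by
        refine le_csInf hAne fun c hc => ?_
        rw [div_le_iff₀ hγ]
        have := hstep c hc
        linarith
      rw [div_le_iff₀ hγ] at h1
      linarith
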